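/- For every 1-free star expression r ∈ StExp, the inclusion map ⟨r⟩ ↪ StExp of the subchart of the syntactic chart generated by r is a solution to ⟨r⟩. Equivalently, for every s ∈ ⟨r⟩ with δ(s) = {(a1, s1), …, (an, sn), (b1, ✓), …, (bm, ✓)}, one has SL* ⊢ s = a1·s1 + ⋯ + an·sn + b1 + ⋯ + bm. -/

import Mathlib

/-- A chart over action alphabet `Act` with state space `X`: each state is assigned a
finite set of transitions, either `(a, none)` (i.e. `x →a ✓`) or `(a, some y)` (i.e. `x →a y`). -/
structure Chart (Act X : Type) where
  tr : X → Finset (Act × Option X)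

/-- `x →a ✓` in the chart `C`. -/
def Chart.Halts {Act X : Type} (C : Chart Act X) (x : X) : Prop :=
  ∃ a : Act, (a, (none : Option X)) ∈ C.tr x

/-- `x → y` (for some action) in the chart `C`. -/
def Chart.StepRel {Act X : Type} (C : Chart Act X) (x y : X) : Prop :=
  ∃ a : Act, (a, some y) ∈ C.tr x

/-- `R` is a bisimulation between the charts `C` and `D`. -/
def IsBisim {Act X Y : Type} (C : Chart Act X) (D : Chart Act Y) (R : X → Y → Prop) : Prop :=
  ∀ x y, R x y → ∀ a : Act,
    (((a, (none : Option X)) ∈ C.tr x) ↔ ((a, (none : Option Y)) ∈ D.tr y)) ∧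
    (∀ x', (a, some x') ∈ C.tr x → ∃ y', (a, some y') ∈ D.tr y ∧ R x' y') ∧
    (∀ y', (a, some y') ∈ D.tr y → ∃ x', (a, some x') ∈ C.tr x ∧ R x' y')

/-- States `x` of `C` and `y` of `D` are bisimilar. -/
def Bisimilar {Act X Y : Type} (C : Chart Act X) (D : Chart Act Y) (x : X) (y : Y) : Prop :=
  ∃ R, IsBisim C D R ∧ R x y

/-- A chart homomorphism is a function whose graph is a bisimulation. -/
def IsChartHom {Act X Y : Type} (C : Chart Act X) (D : Chart Act Y) (h : X → Y) : Prop :=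
  IsBisim C D (fun x y => h x = y)

/-- 1-free star expressions over the alphabet `Act`. -/
inductive StExp (Act : Type) : Type where
  | zero : StExp Act
  | act : Act → StExp Act
  | add : StExp Act → StExp Act → StExp Act
  | mul : StExp Act → StExp Act → StExp Act
  | star : StExp Act → StExp Act → StExp Act
deriving DecidableEq

/-- Continuation after a transition of the left operand: `✓` continues as `s`,
and a state `t` continues as `t·s`. -/
def StExp.seqAfter {Act : Type} (s : StExp Act) : Option (StExp Act) → StExp Act
  | none => s
  | some t => t.mul s

/-- The transition function of the syntactic chart, following Antimirov-style rules. -/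
def StExp.tr {Act : Type} [DecidableEq Act] : StExp Act → Finset (Act × Option (StExp Act))
  | .zero => ∅
  | .act a => {(a, none)}
  | .add r s => r.tr ∪ s.tr
  | .mul r s => r.tr.image (fun p => (p.1, some (StExp.seqAfter s p.2)))
  | .star r s =>
      (r.tr.image (fun p => (p.1, some (StExp.seqAfter (StExp.star r s) p.2)))) ∪ s.tr

/-- The syntactic chart `(StExp, δ)`. -/
def synChart (Act : Type) [DecidableEq Act] : Chart Act (StExp Act) := ⟨StExp.tr⟩

/-- Derivability `SL* ⊢ r = s` from Grabmayer and Fokkink's axioms together with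
the laws of equational logic. -/
inductive SLEq {Act : Type} : StExp Act → StExp Act → Prop where
  | add_comm (x y : StExp Act) : SLEq (x.add y) (y.add x)
  | add_assoc (x y z : StExp Act) : SLEq ((x.add y).add z) (x.add (y.add z))
  | add_idem (x : StExp Act) : SLEq (x.add x) x
  | add_zero (x : StExp Act) : SLEq (x.add .zero) x
  | right_distrib (x y z : StExp Act) : SLEq ((x.add y).mul z) ((x.mul z).add (y.mul z))
  | mul_assoc (x y z : StExp Act) : SLEq ((x.mul y).mul z) (x.mul (y.mul z))
  | zero_mul (x : StExp Act) : SLEq (StExp.zero.mul x) .zero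
  | star_unfold (x y : StExp Act) : SLEq (x.star y) ((x.mul (x.star y)).add y)
  | fixpoint {x y z : StExp Act} : SLEq x ((y.mul x).add z) → SLEq x (y.star z)
  | refl (x : StExp Act) : SLEq x x
  | symm {x y : StExp Act} : SLEq x y → SLEq y x
  | trans {x y z : StExp Act} : SLEq x y → SLEq y z → SLEq x z
  | add_congr {x x' y y' : StExp Act} : SLEq x x' → SLEq y y' → SLEq (x.add y) (x'.add y')
  | mul_congr {x x' y y' : StExp Act} : SLEq x x' → SLEq y y' → SLEq (x.mul y) (x'.mul y')
  | star_congr {x x' y y' : StExp Act} : SLEq x x' → SLEq y y' → SLEq (x.star y) (x'.star y')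

/-- The expression associated to a single transition under a map `φ`:
`(a, ✓)` yields `a` and `(a, some x)` yields `a·φ(x)`. -/
def pairExp {Act X : Type} (φ : X → StExp Act) : Act × Option X → StExp Act
  | (a, none) => .act a
  | (a, some x) => (StExp.act a).mul (φ x)

/-- The sum `e1 + ⋯ + en` of a list of expressions (the empty sum is `0`). -/
def listSum {Act : Type} : List (StExp Act) → StExp Act :=
  fun l => l.foldr StExp.add StExp.zero

/-- `φ` is a solution to the chart `C`: for each state `x` with
`δ(x) = {(a1,x1),…,(an,xn),(b1,✓),…,(bm,✓)}` we have
`SL* ⊢ φ(x) = a1·φ(x1) + ⋯ + an·φ(xn) + b1 + ⋯ + bm`. -/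
def IsSolution {Act X : Type} (C : Chart Act X) (φ : X → StExp Act) : Prop :=
  ∀ x : X, SLEq (φ x) (listSum (((C.tr x).toList).map (pairExp φ)))

lemma SLEq.zero_add {Act : Type} (x : StExp Act) : SLEq (StExp.zero.add x) x :=
  (SLEq.add_comm _ _).trans (SLEq.add_zero x)

lemma listSum_append {Act : Type} (l1 l2 : List (StExp Act)) :
    SLEq (listSum (l1 ++ l2)) ((listSum l1).add (listSum l2)) := by
  induction l1 with
  | nil => exact (SLEq.zero_add _).symm
  | cons a l ih =>
    exact (SLEq.add_congr (SLEq.refl a) ih).trans (SLEq.add_assoc _ _ _).symm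

lemma absorb_mem {Act : Type} {a : StExp Act} :
    ∀ {l : List (StExp Act)}, a ∈ l → SLEq (a.add (listSum l)) (listSum l) := by
  intro l hl
  induction l with
  | nil => cases hl
  | cons b l ih =>
    rcases List.mem_cons.mp hl with h | h
    · subst h
      exact (SLEq.add_assoc a a (listSum l)).symm.trans
        (SLEq.add_congr (SLEq.add_idem a) (SLEq.refl _))
    · exact ((SLEq.add_assoc a b (listSum l)).symm.trans
        ((SLEq.add_congr (SLEq.add_comm a b) (SLEq.refl _)).trans
          (SLEq.add_assoc b a (listSum l)))).trans
        (SLEq.add_congr (SLEq.refl b) (ih h))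

lemma absorb_sub {Act : Type} {l1 l2 : List (StExp Act)} (h : ∀ x ∈ l2, x ∈ l1) :
    SLEq ((listSum l1).add (listSum l2)) (listSum l1) := by
  induction l2 with
  | nil => exact SLEq.add_zero _
  | cons a l ih =>
    have h1 : SLEq ((listSum l1).add (listSum (a :: l)))
        ((listSum l1).add (listSum l)) :=
      (SLEq.add_assoc (listSum l1) a (listSum l)).symm.trans
        ((SLEq.add_congr ((SLEq.add_comm (listSum l1) a).trans
            (absorb_mem (h a List.mem_cons_self))) (SLEq.refl _)))
    exact h1.trans (ih fun x hx => h x (List.mem_cons_of_mem _ hx))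

lemma listSum_perm {Act : Type} {l1 l2 : List (StExp Act)}
    (h : ∀ x, x ∈ l1 ↔ x ∈ l2) : SLEq (listSum l1) (listSum l2) :=
  ((absorb_sub (fun x hx => (h x).mpr hx)).symm.trans (SLEq.add_comm _ _)).trans
    (absorb_sub (fun x hx => (h x).mp hx))

lemma listSum_map_congr {Act α : Type} {g h : α → StExp Act} :
    ∀ {l : List α}, (∀ p ∈ l, SLEq (g p) (h p)) →
      SLEq (listSum (l.map g)) (listSum (l.map h)) := by
  intro l hl
  induction l with
  | nil => exact SLEq.refl _
  | cons a l ih =>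
    exact SLEq.add_congr (hl a List.mem_cons_self)
      (ih fun p hp => hl p (List.mem_cons_of_mem _ hp))

lemma listSum_mul {Act α : Type} (g : α → StExp Act) (s : StExp Act) :
    ∀ (l : List α),
      SLEq ((listSum (l.map g)).mul s) (listSum (l.map fun p => (g p).mul s)) := by
  intro l
  induction l with
  | nil => exact SLEq.zero_mul s
  | cons a l ih =>
    exact (SLEq.right_distrib (g a) (listSum (l.map g)) s).trans
      (SLEq.add_congr (SLEq.refl _) ih)

lemma pair_mul {Act : Type} (s : StExp Act) (p : Act × Option (StExp Act)) :
    SLEq ((pairExp id p).mul s) (pairExp id (p.1, some (StExp.seqAfter s p.2))) := by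
  obtain ⟨a, _ | t⟩ := p
  · exact SLEq.refl _
  · exact SLEq.mul_assoc _ _ _

lemma mul_sum {Act : Type} [DecidableEq Act] (r s : StExp Act)
    (ihr : SLEq r (listSum (((StExp.tr r).toList).map (pairExp id)))) :
    SLEq (r.mul s)
      (listSum (((StExp.tr r).toList).map
        (fun p => pairExp id (p.1, some (StExp.seqAfter s p.2))))) :=
  ((SLEq.mul_congr ihr (SLEq.refl s)).trans (listSum_mul (pairExp id) s _)).trans
    (listSum_map_congr (fun p _ => pair_mul s p))

lemma sum_tr {Act : Type} [DecidableEq Act] :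
    ∀ s : StExp Act, SLEq s (listSum (((StExp.tr s).toList).map (pairExp id))) := by
  intro s
  induction s with
  | zero => simp [StExp.tr, listSum]; exact SLEq.refl _
  | act a =>
    simp only [StExp.tr, Finset.toList_singleton, List.map_cons, List.map_nil]
    exact (SLEq.add_zero _).symm
  | add r s ihr ihs =>
    refine ((SLEq.add_congr ihr ihs).trans (listSum_append _ _).symm).trans
      (listSum_perm ?_)
    intro x
    simp only [StExp.tr, List.mem_append, List.mem_map, Finset.mem_toList,
      Finset.mem_union]
    constructor
    · rintro (⟨p, hp, rfl⟩ | ⟨p, hp, rfl⟩)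
      · exact ⟨p, Or.inl hp, rfl⟩
      · exact ⟨p, Or.inr hp, rfl⟩
    · rintro ⟨p, hp | hp, rfl⟩
      · exact Or.inl ⟨p, hp, rfl⟩
      · exact Or.inr ⟨p, hp, rfl⟩
  | mul r s ihr ihs =>
    refine (mul_sum r s ihr).trans (listSum_perm ?_)
    intro x
    simp only [StExp.tr, List.mem_map, Finset.mem_toList, Finset.mem_image]
    constructor
    · rintro ⟨p, hp, rfl⟩
      exact ⟨_, ⟨p, hp, rfl⟩, rfl⟩
    · rintro ⟨q, ⟨p, hp, rfl⟩, rfl⟩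
      exact ⟨p, hp, rfl⟩
  | star r s ihr ihs =>
    refine (SLEq.star_unfold r s).trans ?_
    refine ((SLEq.add_congr (mul_sum r (r.star s) ihr) ihs).trans
      (listSum_append _ _).symm).trans (listSum_perm ?_)
    intro x
    simp only [StExp.tr, List.mem_append, List.mem_map, Finset.mem_toList,
      Finset.mem_union, Finset.mem_image]
    constructor
    · rintro (⟨p, hp, rfl⟩ | ⟨p, hp, rfl⟩)
      · exact ⟨_, Or.inl ⟨p, hp, rfl⟩, rfl⟩
      · exact ⟨p, Or.inr hp, rfl⟩
    · rintro ⟨q, (⟨p, hp, rfl⟩ | hq), rfl⟩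
      · exact Or.inl ⟨p, hp, rfl⟩
      · exact Or.inr ⟨q, hq, rfl⟩

/-- The inclusion of the subchart `⟨r⟩` of the syntactic chart generated by `r` is a
solution to `⟨r⟩`: every expression `s` reachable from `r`, with
`δ(s) = {(a1,s1),…,(an,sn),(b1,✓),…,(bm,✓)}`, satisfies
`SL* ⊢ s = a1·s1 + ⋯ + an·sn + b1 + ⋯ + bm`. -/
theorem inclusion_is_solution {Act : Type} [DecidableEq Act] (r s : StExp Act)
    (hs : Relation.ReflTransGen ((synChart Act).StepRel) r s) :
    SLEq s (listSum ((((synChart Act).tr s).toList).map (pairExp id))) :=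
  sum_tr s
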